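/- Let (X, ‖·‖) be a real normed space, x, y ∈ X, and 0 < p < 1. Then (‖x‖^p + ‖y‖^p)/(4(p+1)) ≤ ∫₀¹ ‖(1−t)x + ty‖^p dt ≤ ‖x‖^p + ‖y‖^p. -/

import Mathlib

open MeasureTheory intervalIntegral Real Set

theorem norm_rpow_hermite_hadamard
    {X : Type*} [NormedAddCommGroup X] [NormedSpace ℝ X]
    (x y : X) (p : ℝ) (hp0 : 0 < p) (hp1 : p < 1) :
    (‖x‖ ^ p + ‖y‖ ^ p) / (4 * (p + 1)) ≤
      (∫ t in (0:ℝ)..1, ‖(1 - t) • x + t • y‖ ^ p) ∧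
    (∫ t in (0:ℝ)..1, ‖(1 - t) • x + t • y‖ ^ p) ≤ ‖x‖ ^ p + ‖y‖ ^ p := by
  set a := ‖x‖ with ha_def
  set b := ‖y‖ with hb_def
  have ha : 0 ≤ a := norm_nonneg x
  have hb : 0 ≤ b := norm_nonneg y
  have hp0' : 0 ≤ p := hp0.le
  have hq : (0:ℝ) < p + 1 := by linarith
  have hcont : Continuous (fun t : ℝ => ‖(1 - t) • x + t • y‖ ^ p) := by
    apply (Real.continuous_rpow_const hp0').comp
    fun_prop
  have hfnn : ∀ t : ℝ, 0 ≤ ‖(1 - t) • x + t • y‖ ^ p :=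
    fun t => Real.rpow_nonneg (norm_nonneg _) p
  constructor
  · -- lower bound
    rcases eq_or_lt_of_le (add_nonneg ha hb) with hs | hs
    · -- a + b = 0, so a = b = 0
      have ha0 : a = 0 := by linarith
      have hb0 : b = 0 := by linarith
      rw [ha0, hb0, Real.zero_rpow hp0.ne']
      simp only [add_zero, zero_div]
      exact intervalIntegral.integral_nonneg zero_le_one fun t _ => hfnn t
    · set s : ℝ := a + b with hs_def
      have hs0 : s ≠ 0 := hs.ne'
      set c : ℝ := a / s with hc_def
      have hc0 : 0 ≤ c := div_nonneg ha hs.le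
      have hc1 : c ≤ 1 := by
        rw [hc_def, div_le_one hs]; linarith
      have hcs : c * s = a := div_mul_cancel₀ a hs0
      -- pointwise lower bounds
      have key1 : ∀ t ∈ Icc (0:ℝ) c, (a - t * s) ^ p ≤ ‖(1 - t) • x + t • y‖ ^ p := by
        intro t ht
        obtain ⟨ht0, htc⟩ := ht
        have hts : t * s ≤ a := by
          calc t * s ≤ c * s := by nlinarith
          _ = a := hcs
        apply Real.rpow_le_rpow (by linarith) _ hp0'
        have h1 : ‖(1 - t) • x‖ ≤ ‖(1 - t) • x + t • y‖ + ‖t • y‖ :=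
          norm_le_add_norm_add _ _
        rw [norm_smul, norm_smul] at h1
        have ht1 : t ≤ 1 := le_trans htc hc1
        rw [Real.norm_eq_abs, Real.norm_eq_abs, abs_of_nonneg ht0,
          abs_of_nonneg (by linarith : (0:ℝ) ≤ 1 - t)] at h1
        have : a - t * s = (1 - t) * a - t * b := by rw [hs_def]; ring
        linarith
      have key2 : ∀ t ∈ Icc c (1:ℝ), (t * s - a) ^ p ≤ ‖(1 - t) • x + t • y‖ ^ p := by
        intro t ht
        obtain ⟨htc, ht1⟩ := ht
        have hts : a ≤ t * s := by
          calc a = c * s := hcs.symm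
          _ ≤ t * s := by nlinarith
        apply Real.rpow_le_rpow (by linarith) _ hp0'
        have h1 : ‖t • y‖ ≤ ‖(1 - t) • x + t • y‖ + ‖(1 - t) • x‖ :=
          norm_le_add_norm_add' _ _
        rw [norm_smul, norm_smul] at h1
        have ht0 : 0 ≤ t := le_trans hc0 htc
        rw [Real.norm_eq_abs, Real.norm_eq_abs, abs_of_nonneg ht0,
          abs_of_nonneg (by linarith : (0:ℝ) ≤ 1 - t)] at h1
        have : t * s - a = t * b - (1 - t) * a := by rw [hs_def]; ring
        linarith
      -- FTC computations
      have hint1 : (∫ t in (0:ℝ)..c, (a - t * s) ^ p) = a ^ (p + 1) / ((p + 1) * s) := by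
        have hderiv : ∀ t ∈ uIcc (0:ℝ) c,
            HasDerivAt (fun t : ℝ => -(a - t * s) ^ (p + 1) / ((p + 1) * s))
              ((a - t * s) ^ p) t := by
          intro t _
          have h1 : HasDerivAt (fun t : ℝ => a - t * s) (-s) t := by
            simpa [mul_comm] using ((hasDerivAt_id t).const_mul s).const_sub a
          have h2 : HasDerivAt (fun u : ℝ => u ^ (p + 1))
              ((p + 1) * (a - t * s) ^ p) (a - t * s) := by
            have := Real.hasDerivAt_rpow_const (x := a - t * s) (p := p + 1)
              (Or.inr (by linarith))
            simpa using this
          have h3 := (h2.comp t h1)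
          have h4 := (h3.neg).div_const ((p + 1) * s)
          refine h4.congr_deriv ?_
          rw [div_eq_iff (mul_ne_zero hq.ne' hs0)]
          ring
        have hintd : IntervalIntegrable (fun t : ℝ => (a - t * s) ^ p) volume 0 c := by
          apply Continuous.intervalIntegrable
          apply (Real.continuous_rpow_const hp0').comp
          fun_prop
        rw [intervalIntegral.integral_eq_sub_of_hasDerivAt hderiv hintd]
        have : a - c * s = 0 := by rw [hcs]; ring
        rw [this, Real.zero_rpow hq.ne']
        simp only [neg_zero, zero_div, zero_mul, mul_zero, sub_zero]
        ring
      have hint2 : (∫ t in c..(1:ℝ), (t * s - a) ^ p) = b ^ (p + 1) / ((p + 1) * s) := by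
        have hderiv : ∀ t ∈ uIcc c (1:ℝ),
            HasDerivAt (fun t : ℝ => (t * s - a) ^ (p + 1) / ((p + 1) * s))
              ((t * s - a) ^ p) t := by
          intro t _
          have h1 : HasDerivAt (fun t : ℝ => t * s - a) s t := by
            simpa using ((hasDerivAt_id t).mul_const s).sub_const a
          have h2 : HasDerivAt (fun u : ℝ => u ^ (p + 1))
              ((p + 1) * (t * s - a) ^ p) (t * s - a) := by
            have := Real.hasDerivAt_rpow_const (x := t * s - a) (p := p + 1)
              (Or.inr (by linarith))
            simpa using this
          have h4 := (h2.comp t h1).div_const ((p + 1) * s)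
          refine h4.congr_deriv ?_
          rw [div_eq_iff (mul_ne_zero hq.ne' hs0)]
          ring
        have hintd : IntervalIntegrable (fun t : ℝ => (t * s - a) ^ p) volume c 1 := by
          apply Continuous.intervalIntegrable
          apply (Real.continuous_rpow_const hp0').comp
          fun_prop
        rw [intervalIntegral.integral_eq_sub_of_hasDerivAt hderiv hintd]
        have h1 : c * s - a = 0 := by rw [hcs]; ring
        have h2 : 1 * s - a = b := by rw [hs_def]; ring
        rw [h1, h2, Real.zero_rpow hq.ne']
        simp
      -- combine
      have hsplit : (∫ t in (0:ℝ)..1, ‖(1 - t) • x + t • y‖ ^ p) =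
          (∫ t in (0:ℝ)..c, ‖(1 - t) • x + t • y‖ ^ p) +
          (∫ t in c..(1:ℝ), ‖(1 - t) • x + t • y‖ ^ p) :=
        (intervalIntegral.integral_add_adjacent_intervals
          (hcont.intervalIntegrable 0 c) (hcont.intervalIntegrable c 1)).symm
      have hmono1 : (∫ t in (0:ℝ)..c, (a - t * s) ^ p) ≤
          (∫ t in (0:ℝ)..c, ‖(1 - t) • x + t • y‖ ^ p) := by
        apply intervalIntegral.integral_mono_on hc0 _ (hcont.intervalIntegrable 0 c) key1
        apply Continuous.intervalIntegrable
        apply (Real.continuous_rpow_const hp0').comp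
        fun_prop
      have hmono2 : (∫ t in c..(1:ℝ), (t * s - a) ^ p) ≤
          (∫ t in c..(1:ℝ), ‖(1 - t) • x + t • y‖ ^ p) := by
        apply intervalIntegral.integral_mono_on hc1 _ (hcont.intervalIntegrable c 1) key2
        apply Continuous.intervalIntegrable
        apply (Real.continuous_rpow_const hp0').comp
        fun_prop
      -- arithmetic
      have hap : a ^ (p + 1) = a ^ p * a := by
        rcases eq_or_lt_of_le ha with h | h
        · rw [← h, Real.zero_rpow hq.ne', mul_zero]
        · exact Real.rpow_add_one h.ne' p
      have hbp : b ^ (p + 1) = b ^ p * b := by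
        rcases eq_or_lt_of_le hb with h | h
        · rw [← h, Real.zero_rpow hq.ne', mul_zero]
        · exact Real.rpow_add_one h.ne' p
      have hrearrange : a ^ p * b + b ^ p * a ≤ a ^ p * a + b ^ p * b := by
        rcases le_total a b with h | h
        · have : a ^ p ≤ b ^ p := Real.rpow_le_rpow ha h hp0'
          nlinarith
        · have : b ^ p ≤ a ^ p := Real.rpow_le_rpow hb h hp0'
          nlinarith
      have hanp : 0 ≤ a ^ p := Real.rpow_nonneg ha p
      have hbnp : 0 ≤ b ^ p := Real.rpow_nonneg hb p
      have hfinal : (a ^ p + b ^ p) / (4 * (p + 1)) ≤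
          a ^ (p + 1) / ((p + 1) * s) + b ^ (p + 1) / ((p + 1) * s) := by
        rw [← add_div, div_le_div_iff₀ (by linarith) (by positivity), hap, hbp, hs_def]
        nlinarith [mul_nonneg hanp ha, mul_nonneg hbnp hb]
      calc (a ^ p + b ^ p) / (4 * (p + 1))
          ≤ a ^ (p + 1) / ((p + 1) * s) + b ^ (p + 1) / ((p + 1) * s) := hfinal
        _ = (∫ t in (0:ℝ)..c, (a - t * s) ^ p) + (∫ t in c..(1:ℝ), (t * s - a) ^ p) := by
            rw [hint1, hint2]
        _ ≤ (∫ t in (0:ℝ)..c, ‖(1 - t) • x + t • y‖ ^ p) +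
            (∫ t in c..(1:ℝ), ‖(1 - t) • x + t • y‖ ^ p) := add_le_add hmono1 hmono2
        _ = ∫ t in (0:ℝ)..1, ‖(1 - t) • x + t • y‖ ^ p := hsplit.symm
  · -- upper bound
    have hub : ∀ t ∈ Icc (0:ℝ) 1, ‖(1 - t) • x + t • y‖ ^ p ≤ a ^ p + b ^ p := by
      intro t ht
      obtain ⟨ht0, ht1⟩ := ht
      have h1 : ‖(1 - t) • x + t • y‖ ≤ max a b := by
        calc ‖(1 - t) • x + t • y‖ ≤ ‖(1 - t) • x‖ + ‖t • y‖ := norm_add_le _ _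
          _ = (1 - t) * a + t * b := by
              rw [norm_smul, norm_smul, Real.norm_eq_abs, Real.norm_eq_abs,
                abs_of_nonneg ht0, abs_of_nonneg (by linarith : (0:ℝ) ≤ 1 - t)]
          _ ≤ (1 - t) * max a b + t * max a b := by
              gcongr
              · exact le_max_left a b
              · exact le_max_right a b
          _ = max a b := by ring
      calc ‖(1 - t) • x + t • y‖ ^ p ≤ (max a b) ^ p :=
            Real.rpow_le_rpow (norm_nonneg _) h1 hp0'
        _ ≤ a ^ p + b ^ p := by
            rcases max_cases a b with ⟨h, _⟩ | ⟨h, _⟩ <;> rw [h]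
            · nlinarith [Real.rpow_nonneg hb p]
            · nlinarith [Real.rpow_nonneg ha p]
    calc (∫ t in (0:ℝ)..1, ‖(1 - t) • x + t • y‖ ^ p)
        ≤ ∫ _ in (0:ℝ)..1, (a ^ p + b ^ p) :=
          intervalIntegral.integral_mono_on zero_le_one
            (hcont.intervalIntegrable 0 1) intervalIntegrable_const hub
      _ = a ^ p + b ^ p := by simp
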